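/- Let b_{n+1} = f(b_n) with f(x) = sqrt(Bx + (B-1)^2) - (B-1) and b_0 = b ∈ (-(B-2), 0). Then b_n < 0 for all n, b_n → 0, and there exists H_b > 0 with b_n ~ -H_b (B/(2(B-1)))^n as n → ∞; moreover H_b ~ |b| as b → 0. -/

import Mathlib

open Filter Topology

set_option maxHeartbeats 1000000

lemma stmt15_step_mem {B y : ℝ} (hB : 2 < B) (hy : y ∈ Set.Ioo (-(B-2)) 0) :
    Real.sqrt (B * y + (B-1)^2) - (B-1) ∈ Set.Ioo (-(B-2)) 0 := by
  obtain ⟨h1, h2⟩ := hy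
  have harg : 1 < B * y + (B-1)^2 := by nlinarith
  have hlt : Real.sqrt (B * y + (B-1)^2) < B - 1 :=
    (Real.sqrt_lt' (by linarith)).mpr (by nlinarith)
  have hgt : 1 < Real.sqrt (B * y + (B-1)^2) :=
    (Real.lt_sqrt (by norm_num)).mpr (by nlinarith)
  exact ⟨by linarith, by linarith⟩

lemma stmt15_step_eq {B y : ℝ} (hB : 2 < B) (hy : y ∈ Set.Ioo (-(B-2)) 0) :
    Real.sqrt (B * y + (B-1)^2) - (B-1)
      = B * y / (Real.sqrt (B * y + (B-1)^2) + (B-1)) := by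
  obtain ⟨h1, h2⟩ := hy
  have harg : 1 < B * y + (B-1)^2 := by nlinarith
  set s := Real.sqrt (B * y + (B-1)^2) with hs
  have hs2 : s^2 = B * y + (B-1)^2 := Real.sq_sqrt (by linarith)
  have hspos : 0 < s := Real.sqrt_pos.mpr (by linarith)
  have hden : s + (B-1) ≠ 0 := by intro h; apply absurd h; intro h; nlinarith
  field_simp
  nlinarith [hs2]

lemma stmt15_master (B x : ℝ) (hB : 2 < B) (a : ℕ → ℝ) (h0 : a 0 = x)
    (hrec : ∀ n, a (n+1) = Real.sqrt (B * a n + (B-1)^2) - (B-1))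
    (hx : x ∈ Set.Ioo (-(B-2)) 0)
    (q' : ℝ) (hq'1 : q' < 1)
    (hq' : B / (Real.sqrt (B*x+(B-1)^2) + (B-1)) ≤ q') :
    (∀ n, a n < 0) ∧ Tendsto a atTop (𝓝 0) ∧
    Tendsto (fun n => a n / (B / (2*(B-1)))^n) atTop
      (𝓝 (⨅ n, a n / (B / (2*(B-1)))^n)) ∧
    (⨅ n, a n / (B / (2*(B-1)))^n) ≤ x ∧
    x * Real.exp ((-x) / (B*(1-q'))) ≤ (⨅ n, a n / (B / (2*(B-1)))^n) := by
  obtain ⟨hx1, hx2⟩ := hx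
  have hB1 : (1:ℝ) < B - 1 := by linarith
  set r := B / (2*(B-1)) with hr
  have hr0 : 0 < r := by apply div_pos <;> linarith
  -- membership
  have hmem : ∀ n, a n ∈ Set.Ioo (-(B-2)) 0 := by
    intro n; induction n with
    | zero => rw [h0]; exact ⟨hx1, hx2⟩
    | succ n ih => rw [hrec]; exact stmt15_step_mem hB ih
  have hneg : ∀ n, a n < 0 := fun n => (hmem n).2
  set s : ℕ → ℝ := fun n => Real.sqrt (B * a n + (B-1)^2) with hsdef
  have harg : ∀ n, 1 < B * a n + (B-1)^2 := by
    intro n; have := (hmem n).1; nlinarith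
  have hs1 : ∀ n, 1 < s n := fun n =>
    (Real.lt_sqrt (by norm_num)).mpr (by nlinarith [harg n])
  have hsB : ∀ n, s n < B - 1 := fun n =>
    (Real.sqrt_lt' (by linarith)).mpr (by nlinarith [(hmem n).2])
  have heq : ∀ n, a (n+1) = B * a n / (s n + (B-1)) := by
    intro n; rw [hrec n]; exact stmt15_step_eq hB (hmem n)
  -- monotone
  have hmono : Monotone a := by
    apply monotone_nat_of_le_succ
    intro n
    rw [heq n, le_div_iff₀ (by linarith [hs1 n])]
    nlinarith [hneg n, hs1 n]
  have hxle : ∀ n, x ≤ a n := fun n => h0 ▸ hmono (Nat.zero_le n)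
  have hs0 : ∀ n, Real.sqrt (B*x+(B-1)^2) ≤ s n := by
    intro n
    apply Real.sqrt_le_sqrt
    nlinarith [hxle n]
  have hs0pos : (0:ℝ) < Real.sqrt (B*x+(B-1)^2) + (B-1) := by
    have := Real.sqrt_nonneg (B*x+(B-1)^2); linarith
  have hq'0 : 0 < q' := lt_of_lt_of_le (div_pos (by linarith) hs0pos) hq'
  -- geometric decay
  have hdecay : ∀ n, -a n ≤ (-x) * q'^n := by
    intro n; induction n with
    | zero => simp [h0]
    | succ n ih =>
      have h1 : -a (n+1) = B * (-a n) / (s n + (B-1)) := by rw [heq n]; ring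
      have h2 : B * (-a n) / (s n + (B-1)) ≤ B * (-a n) / (Real.sqrt (B*x+(B-1)^2) + (B-1)) := by
        apply div_le_div_of_nonneg_left _ hs0pos _
        · nlinarith [hneg n]
        · linarith [hs0 n]
      have h3 : B * (-a n) / (Real.sqrt (B*x+(B-1)^2) + (B-1))
          = (B / (Real.sqrt (B*x+(B-1)^2) + (B-1))) * (-a n) := by ring
      calc -a (n+1) ≤ (B / (Real.sqrt (B*x+(B-1)^2) + (B-1))) * (-a n) := by
            rw [h1, ← h3]; exact h2
        _ ≤ q' * ((-x) * q'^n) := by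
            apply mul_le_mul hq' ih (by linarith [hneg n]) hq'0.le
        _ = (-x) * q'^(n+1) := by ring
  -- tendsto 0
  have hten0 : Tendsto a atTop (𝓝 0) := by
    apply tendsto_of_tendsto_of_tendsto_of_le_of_le
      (g := fun n => x * q'^n) (h := fun _ => (0:ℝ))
    · have : Tendsto (fun n : ℕ => q'^n) atTop (𝓝 0) :=
        tendsto_pow_atTop_nhds_zero_of_lt_one hq'0.le hq'1
      simpa using this.const_mul x
    · exact tendsto_const_nhds
    · intro n; show x * q'^n ≤ a n; nlinarith [hdecay n]
    · intro n; exact (hneg n).le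
  -- the ratio sequence
  set c : ℕ → ℝ := fun n => a n / r^n with hcdef
  have hc0 : c 0 = x := by simp [hcdef, h0]
  have hcneg : ∀ n, c n < 0 := fun n => div_neg_of_neg_of_pos (hneg n) (pow_pos hr0 n)
  have hBr : B / r = 2*(B-1) := by
    rw [hr]; field_simp
  have hcrec : ∀ n, c (n+1) = c n * (2*(B-1)/(s n + (B-1))) := by
    intro n
    have hsne : s n + (B-1) ≠ 0 := by positivity
    have h1 : c (n+1) = B * a n / (s n + (B-1)) / (r^n * r) := by
      simp only [hcdef, heq n, pow_succ]
    rw [h1, ← hBr]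
    have hrne : r ≠ 0 := hr0.ne'
    have hrn : r^n ≠ 0 := pow_ne_zero n hrne
    simp only [hcdef]
    field_simp
  have hfacpos : ∀ n, (0:ℝ) < 2*(B-1)/(s n + (B-1)) := by
    intro n; apply div_pos (by linarith) (by linarith [hs1 n])
  have hfac1 : ∀ n, 1 ≤ 2*(B-1)/(s n + (B-1)) := by
    intro n
    rw [le_div_iff₀ (by linarith [hs1 n])]
    linarith [hsB n]
  have hcanti : Antitone c := by
    apply antitone_nat_of_succ_le
    intro n
    rw [hcrec n]
    nlinarith [hfac1 n, hcneg n]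
  -- exponential bound on the factor
  have hdelta : ∀ n, 2*(B-1)/(s n + (B-1)) ≤ Real.exp ((-x) * q'^n / B) := by
    intro n
    have h1 : 2*(B-1)/(s n + (B-1)) ≤ 1 + (-a n)/B := by
      have hrw : 1 + (-a n)/B = (B - a n)/B := by field_simp; ring
      rw [hrw, div_le_div_iff₀ (by linarith [hs1 n]) (by linarith)]
      have hs2 : (s n)^2 = B * a n + (B-1)^2 := Real.sq_sqrt (by linarith [harg n])
      nlinarith [hs1 n, hsB n, mul_nonneg (sub_nonneg.mpr (hsB n).le)
        (sub_nonneg.mpr (by nlinarith [hs1 n] : B^2 ≤ (s n + (B-1))^2))]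
    have h2 : (-a n)/B ≤ (-x) * q'^n / B := by
      apply div_le_div_of_nonneg_right ?_ (by linarith)
      exact hdecay n
    calc 2*(B-1)/(s n + (B-1)) ≤ 1 + (-x) * q'^n / B := by linarith
      _ ≤ Real.exp ((-x) * q'^n / B) := by
          have := Real.add_one_le_exp ((-x) * q'^n / B); linarith
  -- lower bound on c
  have hcb : ∀ n, -c n ≤ (-x) * Real.exp ((-x) * (∑ k ∈ Finset.range n, q'^k) / B) := by
    intro n; induction n with
    | zero => simp [hc0]
    | succ n ih =>
      have h1 : -c (n+1) = (-c n) * (2*(B-1)/(s n + (B-1))) := by rw [hcrec n]; ring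
      rw [h1, Finset.sum_range_succ]
      calc (-c n) * (2*(B-1)/(s n + (B-1)))
          ≤ ((-x) * Real.exp ((-x) * (∑ k ∈ Finset.range n, q'^k) / B))
            * Real.exp ((-x) * q'^n / B) := by
            apply mul_le_mul ih (hdelta n) (hfacpos n).le
            have := Real.exp_pos ((-x) * (∑ k ∈ Finset.range n, q'^k) / B)
            nlinarith
        _ = (-x) * Real.exp ((-x) * ((∑ k ∈ Finset.range n, q'^k) + q'^n) / B) := by
            rw [mul_assoc, ← Real.exp_add]
            have : (-x * ∑ k ∈ Finset.range n, q'^k) / B + -x * q'^n / B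
                = -x * ((∑ k ∈ Finset.range n, q'^k) + q'^n) / B := by ring
            rw [this]
  have hsum : ∀ n, (∑ k ∈ Finset.range n, q'^k) ≤ 1/(1-q') := by
    intro n
    rw [geom_sum_eq (ne_of_lt hq'1)]
    rw [show (q'^n - 1)/(q' - 1) = (1 - q'^n)/(1 - q') by
      rw [div_eq_div_iff (by linarith) (by linarith)]; ring]
    rw [div_le_div_iff₀ (by linarith) (by linarith)]
    nlinarith [pow_nonneg hq'0.le n]
  have hBq : (0:ℝ) < B * (1 - q') := by
    apply mul_pos (by linarith) (by linarith)
  have hLB : ∀ n, x * Real.exp ((-x)/(B*(1-q'))) ≤ c n := by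
    intro n
    have hSnn : (0:ℝ) ≤ ∑ k ∈ Finset.range n, q'^k :=
      Finset.sum_nonneg (fun k _ => pow_nonneg hq'0.le k)
    have h1 : (-x) * (∑ k ∈ Finset.range n, q'^k) / B ≤ (-x)/(B*(1-q')) := by
      rw [div_le_div_iff₀ (by linarith) hBq]
      have hS := hsum n
      have h2 : (∑ k ∈ Finset.range n, q'^k) * (1 - q') ≤ 1 :=
        (le_div_iff₀ (by linarith : (0:ℝ) < 1 - q')).mp hS
      have hxB : (0:ℝ) ≤ (-x) * B := mul_nonneg (by linarith) (by linarith)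
      nlinarith [mul_le_mul_of_nonneg_left h2 hxB]
    have h3 : Real.exp ((-x) * (∑ k ∈ Finset.range n, q'^k) / B)
        ≤ Real.exp ((-x)/(B*(1-q'))) := Real.exp_le_exp.mpr h1
    have h4 : (-x) * Real.exp ((-x) * (∑ k ∈ Finset.range n, q'^k) / B)
        ≤ (-x) * Real.exp ((-x)/(B*(1-q'))) :=
      mul_le_mul_of_nonneg_left h3 (by linarith)
    have h5 := hcb n
    linarith
  have hbdd : BddBelow (Set.range c) :=
    ⟨x * Real.exp ((-x)/(B*(1-q'))), by rintro _ ⟨n, rfl⟩; exact hLB n⟩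
  exact ⟨hneg, hten0, tendsto_atTop_ciInf hcanti hbdd, hc0 ▸ ciInf_le hbdd 0, le_ciInf hLB⟩

/-- For the recursion `b (n+1) = sqrt (B * b n + (B-1)^2) - (B-1)` with initial value
`x ∈ (-(B-2), 0)`: `b n < 0` for all `n`, `b n → 0`, and there is `H x > 0` with
`b n / (B/(2(B-1)))^n → -H x`; moreover `H x / |x| → 1` as `x → 0⁻`. -/
theorem stmt15 (B : ℝ) (hB : 2 < B) (b : ℝ → ℕ → ℝ)
    (hb0 : ∀ x, b x 0 = x)
    (hbrec : ∀ x n, b x (n + 1) = Real.sqrt (B * b x n + (B - 1) ^ 2) - (B - 1)) :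
    ∃ H : ℝ → ℝ,
      (∀ x ∈ Set.Ioo (-(B - 2)) (0 : ℝ),
        0 < H x ∧ (∀ n, b x n < 0) ∧ Tendsto (b x) atTop (𝓝 0) ∧
        Tendsto (fun n => b x n / (B / (2 * (B - 1))) ^ n) atTop (𝓝 (-H x))) ∧
      Tendsto (fun x => H x / |x|) (𝓝[Set.Ioo (-(B - 2)) (0 : ℝ)] 0) (𝓝 1) := by
  have hB1 : (1:ℝ) < B - 1 := by linarith
  refine ⟨fun x => -(⨅ n, b x n / (B / (2 * (B - 1))) ^ n), ?_, ?_⟩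
  · intro x hx
    have harg : 1 < B * x + (B-1)^2 := by
      obtain ⟨h1, h2⟩ := hx; nlinarith
    have hs : 1 < Real.sqrt (B*x+(B-1)^2) :=
      (Real.lt_sqrt (by norm_num)).mpr (by nlinarith)
    have hq1 : B / (Real.sqrt (B*x+(B-1)^2) + (B-1)) < 1 := by
      rw [div_lt_one (by linarith)]; linarith
    obtain ⟨hneg, hten, hcten, hle, hge⟩ :=
      stmt15_master B x hB (b x) (hb0 x) (hbrec x) hx _ hq1 le_rfl
    refine ⟨by simp only; linarith [hx.2], hneg, hten, ?_⟩
    simp only [neg_neg]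
    exact hcten
  · -- the limit H x / |x| → 1
    set ε := (min 1 (B - 2)) / 2 with hε
    have hε0 : 0 < ε := by
      apply div_pos _ (by norm_num)
      exact lt_min (by norm_num) (by linarith)
    have hεB : ε < B - 2 := by
      have h1 : min 1 (B-2) ≤ B - 2 := min_le_right _ _
      have h2 : 0 < min 1 (B-2) := lt_min (by norm_num) (by linarith)
      rw [hε]; linarith
    have hargε : 1 < B * (-ε) + (B-1)^2 := by nlinarith
    have hsε : 1 < Real.sqrt (B*(-ε)+(B-1)^2) :=
      (Real.lt_sqrt (by norm_num)).mpr (by nlinarith)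
    set qε := B / (Real.sqrt (B*(-ε)+(B-1)^2) + (B-1)) with hqε
    have hqε1 : qε < 1 := by
      rw [hqε, div_lt_one (by linarith)]; linarith
    have hqε0 : 0 < qε := div_pos (by linarith) (by linarith)
    have hBq : (0:ℝ) < B * (1 - qε) := mul_pos (by linarith) (by linarith)
    -- squeeze
    apply tendsto_of_tendsto_of_tendsto_of_le_of_le'
      (g := fun _ => (1:ℝ)) (h := fun x => Real.exp ((-x)/(B*(1-qε))))
    · exact tendsto_const_nhds
    · have hc : Continuous fun x : ℝ => Real.exp ((-x)/(B*(1-qε))) := by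
        continuity
      have := hc.tendsto' 0 1 (by simp)
      exact this.mono_left nhdsWithin_le_nhds
    · -- 1 ≤ H x / |x| eventually
      filter_upwards [self_mem_nhdsWithin] with x hx
      have harg : 1 < B * x + (B-1)^2 := by
        obtain ⟨h1, h2⟩ := hx; nlinarith
      have hs : 1 < Real.sqrt (B*x+(B-1)^2) :=
        (Real.lt_sqrt (by norm_num)).mpr (by nlinarith)
      have hq1 : B / (Real.sqrt (B*x+(B-1)^2) + (B-1)) < 1 := by
        rw [div_lt_one (by linarith)]; linarith
      obtain ⟨hneg, hten, hcten, hle, hge⟩ :=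
        stmt15_master B x hB (b x) (hb0 x) (hbrec x) hx _ hq1 le_rfl
      have habs : |x| = -x := abs_of_neg hx.2
      rw [le_div_iff₀ (by rw [habs]; linarith [hx.2])]

      rw [habs]
      linarith
    · -- H x / |x| ≤ exp(-x/(B(1-qε))) eventually
      have hev : ∀ᶠ x : ℝ in 𝓝[Set.Ioo (-(B-2)) (0:ℝ)] 0, -ε < x :=
        eventually_nhdsWithin_of_eventually_nhds
          (eventually_gt_nhds (by linarith : -ε < 0))
      filter_upwards [self_mem_nhdsWithin, hev] with x hx hxε
      have hsle : Real.sqrt (B*(-ε)+(B-1)^2) ≤ Real.sqrt (B*x+(B-1)^2) := by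
        apply Real.sqrt_le_sqrt; nlinarith
      have hqle : B / (Real.sqrt (B*x+(B-1)^2) + (B-1)) ≤ qε := by
        rw [hqε]
        apply div_le_div_of_nonneg_left (by linarith) (by linarith) (by linarith)
      obtain ⟨hneg, hten, hcten, hle, hge⟩ :=
        stmt15_master B x hB (b x) (hb0 x) (hbrec x) hx qε hqε1 hqle
      have habs : |x| = -x := abs_of_neg hx.2
      rw [div_le_iff₀ (by rw [habs]; linarith [hx.2])]

      rw [habs]
      nlinarith [hge]
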